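/- Let d ≥ 1, let w_1,…,w_d, c ∈ ℂ with Re(w_i) > 0 and Re(c) > 0, let M be a non-negative integer, and let α ∈ ℂ with Re(α) > d − M − 1. Let b : ℕ → ℂ and r > 0 satisfy Σ_{k=0}^∞ b_k z^k/k! = z^d e^{−cz} ∏_{i=1}^d w_i/(e^{w_i z} − 1) for all z with 0 < |z| < r. Then the function t ↦ t^{α−1} ( ∏_{i=1}^d (1−e^{−w_i t})^{−1} − 1 − (t^{−d} e^{−ct}/∏_{i=1}^d w_i) Σ_{k=0}^{M} (−1)^k b_k t^k/k! + e^{−ct} Σ_{k=0}^{M−d} (ct)^k/k! ) is Lebesgue integrable on (0,∞), where the sum Σ_{k=0}^{M−d} is empty (equal to 0) if M < d and t^{β} denotes the principal power of the positive real t. -/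

import Mathlib

open Complex MeasureTheory Set

/-- Norm bound for a product minus one. -/
lemma hb_prod_sub_one {ι : Type*} (s : Finset ι) (x : ι → ℂ) {a bb : ℝ} (hbb : 1 ≤ bb)
    (ha : 0 ≤ a) (hx : ∀ i, ‖x i‖ ≤ bb) (hx1 : ∀ i, ‖x i - 1‖ ≤ a) :
    ‖(∏ i ∈ s, x i) - 1‖ ≤ s.card * bb ^ s.card * a := by
  induction s using Finset.cons_induction with
  | empty => simp [ha]
  | cons j s hj ih =>
    rw [Finset.prod_cons]
    have key : x j * ∏ i ∈ s, x i - 1 = x j * ((∏ i ∈ s, x i) - 1) + (x j - 1) := by ring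
    rw [key, Finset.card_cons]
    calc ‖x j * ((∏ i ∈ s, x i) - 1) + (x j - 1)‖
        ≤ ‖x j * ((∏ i ∈ s, x i) - 1)‖ + ‖x j - 1‖ := norm_add_le _ _
      _ ≤ bb * (s.card * bb ^ s.card * a) + a := by
          rw [norm_mul]
          gcongr
          · exact hx j
          · exact hx1 j
      _ = (s.card : ℝ) * bb ^ (s.card + 1) * a + a := by ring
      _ ≤ (s.card : ℝ) * bb ^ (s.card + 1) * a + bb ^ (s.card + 1) * a := by
          have h1 : (1:ℝ) ≤ bb ^ (s.card + 1) := one_le_pow₀ hbb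
          exact add_le_add le_rfl (le_mul_of_one_le_left ha h1)
      _ = ((s.card + 1 : ℕ) : ℝ) * bb ^ (s.card + 1) * a := by push_cast; ring

lemma hb_exp_norm (z : ℂ) : ‖Complex.exp z‖ = Real.exp z.re := by
  rw [Complex.norm_exp]

lemma hb_re_neg_mul (v : ℂ) (t : ℝ) : (-v * (t : ℂ)).re = -(v.re * t) := by
  simp [Complex.mul_re]

lemma hb_den_ne {v : ℂ} (hv : 0 < v.re) {t : ℝ} (ht : 0 < t) :
    1 - Complex.exp (-v * t) ≠ 0 := by
  intro h
  have h1 : Complex.exp (-v * t) = 1 := by linear_combination -h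
  have h2 : Real.exp ((-v * (t : ℂ)).re) = 1 := by
    rw [← hb_exp_norm, h1, norm_one]
  rw [hb_re_neg_mul, Real.exp_eq_one_iff, neg_eq_zero] at h2
  nlinarith

lemma hb_den_norm {v : ℂ} {t : ℝ} :
    1 - Real.exp (-(v.re * t)) ≤ ‖1 - Complex.exp (-v * t)‖ := by
  have := norm_sub_norm_le (1 : ℂ) (Complex.exp (-v * t))
  rwa [norm_one, hb_exp_norm, hb_re_neg_mul] at this

/-- Continuity of the integrand on `(0, ∞)`. -/
lemma hb_continuousOn (d : ℕ) (w : Fin d → ℂ) (c : ℂ) (hw : ∀ i, 0 < (w i).re)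
    (M : ℕ) (α : ℂ) (b : ℕ → ℂ) :
    ContinuousOn (fun t : ℝ =>
      (t : ℂ) ^ (α - 1) *
        ((∏ i, (1 - Complex.exp (-(w i) * t))⁻¹) - 1 -
          (t : ℂ) ^ (-(d : ℂ)) * Complex.exp (-c * t) / (∏ i, w i) *
            ∑ k ∈ Finset.range (M + 1), (-1 : ℂ) ^ k * b k * (t : ℂ) ^ k / (k.factorial : ℂ) +
          Complex.exp (-c * t) *
            ∑ k ∈ Finset.range (M + 1 - d), (c * t) ^ k / (k.factorial : ℂ)))
      (Ioi 0) := by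
  have hcpow : ∀ s : ℂ, ContinuousOn (fun u : ℝ => (u : ℂ) ^ s) (Ioi 0) := by
    intro s t ht
    apply ContinuousAt.continuousWithinAt
    exact (continuousAt_cpow_const (Complex.mem_slitPlane_iff.2 (Or.inl (by simpa using ht)))).comp
      Complex.continuous_ofReal.continuousAt
  have hexp : ∀ v : ℂ, Continuous (fun u : ℝ => Complex.exp (v * u)) := fun v =>
    Complex.continuous_exp.comp (continuous_const.mul Complex.continuous_ofReal)
  have hP : ContinuousOn (fun u : ℝ => ∏ i, (1 - Complex.exp (-(w i) * u))⁻¹) (Ioi 0) := by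
    apply continuousOn_finset_prod
    intro i _
    apply ContinuousOn.inv₀
    · exact (continuous_const.sub (hexp (-(w i)))).continuousOn
    · exact fun t ht => hb_den_ne (hw i) ht
  have hsum1 : Continuous (fun u : ℝ =>
      ∑ k ∈ Finset.range (M + 1), (-1 : ℂ) ^ k * b k * (u : ℂ) ^ k / (k.factorial : ℂ)) := by
    apply continuous_finset_sum
    intro k _
    exact (continuous_const.mul (Complex.continuous_ofReal.pow k)).div_const _
  have hsum2 : Continuous (fun u : ℝ =>
      ∑ k ∈ Finset.range (M + 1 - d), (c * u) ^ k / (k.factorial : ℂ)) := by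
    apply continuous_finset_sum
    intro k _
    exact ((continuous_const.mul Complex.continuous_ofReal).pow k).div_const _
  apply (hcpow (α - 1)).mul
  apply ContinuousOn.add
  · apply ContinuousOn.sub
    · exact hP.sub continuousOn_const
    · exact (((hcpow (-(d:ℂ))).mul (hexp (-c)).continuousOn).div_const _).mul hsum1.continuousOn
  · exact ((hexp (-c)).continuousOn).mul hsum2.continuousOn

set_option maxHeartbeats 1600000 in
theorem homogeneous_barnes_integrable (d : ℕ) (hd : 1 ≤ d) (w : Fin d → ℂ) (c : ℂ)
    (hw : ∀ i, 0 < (w i).re) (hc : 0 < c.re) (M : ℕ)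
    (α : ℂ) (hα : (d : ℝ) - M - 1 < α.re)
    (b : ℕ → ℂ) (r : ℝ) (hr : 0 < r)
    (hb : ∀ z : ℂ, 0 < ‖z‖ → ‖z‖ < r →
      HasSum (fun k : ℕ => b k * z ^ k / (k.factorial : ℂ))
        (z ^ d * Complex.exp (-c * z) * ∏ i, w i / (Complex.exp (w i * z) - 1))) :
    IntegrableOn (fun t : ℝ =>
      (t : ℂ) ^ (α - 1) *
        ((∏ i, (1 - Complex.exp (-(w i) * t))⁻¹) - 1 -
          (t : ℂ) ^ (-(d : ℂ)) * Complex.exp (-c * t) / (∏ i, w i) *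
            ∑ k ∈ Finset.range (M + 1), (-1 : ℂ) ^ k * b k * (t : ℂ) ^ k / (k.factorial : ℂ) +
          Complex.exp (-c * t) *
            ∑ k ∈ Finset.range (M + 1 - d), (c * t) ^ k / (k.factorial : ℂ)))
      (Ioi 0) := by
  set F : ℝ → ℂ := fun t : ℝ =>
      (t : ℂ) ^ (α - 1) *
        ((∏ i, (1 - Complex.exp (-(w i) * t))⁻¹) - 1 -
          (t : ℂ) ^ (-(d : ℂ)) * Complex.exp (-c * t) / (∏ i, w i) *
            ∑ k ∈ Finset.range (M + 1), (-1 : ℂ) ^ k * b k * (t : ℂ) ^ k / (k.factorial : ℂ) +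
          Complex.exp (-c * t) *
            ∑ k ∈ Finset.range (M + 1 - d), (c * t) ^ k / (k.factorial : ℂ)) with hFdef
  have hcont : ContinuousOn F (Ioi 0) := hb_continuousOn d w c hw M α b
  -- basic nonvanishing
  have hw0 : ∀ i, w i ≠ 0 := fun i h => by simpa [h] using hw i
  have hprodw : (∏ i, w i) ≠ 0 := Finset.prod_ne_zero_iff.2 fun i _ => hw0 i
  -- minimum of the real parts
  obtain ⟨m, hm_pos, hm_le⟩ : ∃ m : ℝ, 0 < m ∧ ∀ i, m ≤ (w i).re := by
    obtain ⟨i₁, -, hi₁⟩ := Finset.exists_min_image Finset.univ (fun i => (w i).re)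
      ⟨⟨0, hd⟩, Finset.mem_univ _⟩
    exact ⟨(w i₁).re, hw i₁, fun i => hi₁ i (Finset.mem_univ i)⟩
  set ε : ℝ := min m c.re with hεdef
  have hε : 0 < ε := lt_min hm_pos hc
  -- bound on the coefficients
  obtain ⟨A, hA0, hA⟩ : ∃ A : ℝ, 0 ≤ A ∧ ∀ k : ℕ,
      ‖b k‖ / (k.factorial : ℝ) ≤ A * (2 / r) ^ k := by
    have hz : ‖((r / 2 : ℝ) : ℂ)‖ = r / 2 := by
      rw [Complex.norm_real, Real.norm_eq_abs, abs_of_pos (by linarith)]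
    have h := hb ((r / 2 : ℝ) : ℂ) (by rw [hz]; linarith) (by rw [hz]; linarith)
    have h2 := (h.summable.tendsto_atTop_zero).norm
    rw [norm_zero] at h2
    obtain ⟨A, hA⟩ := h2.bddAbove_range
    rw [mem_upperBounds] at hA
    have hA' : ∀ k : ℕ, ‖b k * ((r / 2 : ℝ) : ℂ) ^ k / ((k.factorial : ℕ) : ℂ)‖ ≤ A :=
      fun k => hA _ ⟨k, rfl⟩
    refine ⟨A, le_trans (norm_nonneg _) (hA' 0), fun k => ?_⟩
    have h3 := hA' k
    have hfacC : ‖((k.factorial : ℕ) : ℂ)‖ = (k.factorial : ℝ) := by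
      rw [Complex.norm_natCast]
    rw [norm_div, norm_mul, norm_pow, hz, hfacC] at h3
    have hpow : (0:ℝ) < (r / 2) ^ k := by positivity
    have hfac : (0:ℝ) < (k.factorial : ℝ) := by positivity
    calc ‖b k‖ / (k.factorial : ℝ)
        = (‖b k‖ * (r / 2) ^ k / (k.factorial : ℝ)) * ((r / 2) ^ k)⁻¹ := by
          field_simp
      _ ≤ A * ((r / 2) ^ k)⁻¹ := by gcongr
      _ = A * (2 / r) ^ k := by rw [← inv_pow, inv_div]
  -- the partial-sum threshold
  set T : ℝ := min (r / 4) (min ((‖c‖ + 1)⁻¹) 1) with hTdef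
  have hT0 : 0 < T := by
    refine lt_min (by linarith) (lt_min (inv_pos.2 ?_) one_pos)
    positivity
  have hT1 : T ≤ 1 := le_trans (min_le_right _ _) (min_le_right _ _)
  have hTr : T ≤ r / 4 := min_le_left _ _
  have hTc : T ≤ (‖c‖ + 1)⁻¹ := le_trans (min_le_right _ _) (min_le_left _ _)
  -- the key HasSum identity for 0 < t < r
  have hkey : ∀ t : ℝ, 0 < t → t < r →
      HasSum (fun k : ℕ => b k * (-(t : ℂ)) ^ k / (k.factorial : ℂ))
        ((t : ℂ) ^ d * Complex.exp (c * t) * ((∏ i, w i) *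
          ∏ i, (1 - Complex.exp (-(w i) * t))⁻¹)) := by
    intro t ht htr
    have hnt : ‖(-(t : ℂ))‖ = t := by
      rw [norm_neg, Complex.norm_real, Real.norm_eq_abs, abs_of_pos ht]
    have h := hb (-(t : ℂ)) (by rw [hnt]; exact ht) (by rw [hnt]; exact htr)
    have hval : (-(t : ℂ)) ^ d * Complex.exp (-c * -(t : ℂ)) *
        ∏ i, w i / (Complex.exp (w i * -(t : ℂ)) - 1)
        = (t : ℂ) ^ d * Complex.exp (c * t) * ((∏ i, w i) *
          ∏ i, (1 - Complex.exp (-(w i) * t))⁻¹) := by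
      have h1 : ∀ i : Fin d, w i / (Complex.exp (w i * -(t : ℂ)) - 1)
          = -1 * (w i * (1 - Complex.exp (-(w i) * t))⁻¹) := by
        intro i
        rw [show w i * -(t : ℂ) = -(w i) * t by ring,
          show Complex.exp (-(w i) * t) - 1 = -(1 - Complex.exp (-(w i) * t)) by ring]
        rw [div_neg, div_eq_mul_inv]
        ring
      rw [Finset.prod_congr rfl fun i _ => h1 i, Finset.prod_mul_distrib,
        Finset.prod_const, Finset.card_univ, Fintype.card_fin,
        Finset.prod_mul_distrib, neg_pow, show -c * -(t : ℂ) = c * t by ring]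
      have hsq : ((-1 : ℂ)) ^ d * (-1 : ℂ) ^ d = 1 := by
        rw [← pow_add, ← two_mul, pow_mul]; norm_num
      linear_combination ((t : ℂ) ^ d * Complex.exp (c * (t : ℂ)) * ((∏ i, w i) *
        ∏ i, (1 - Complex.exp (-(w i) * (t : ℂ)))⁻¹)) * hsq
    rw [hval] at h
    exact h
  -- the algebraic identity for the bracket
  have hbracket : ∀ t : ℝ, 0 < t →
      ((∏ i, (1 - Complex.exp (-(w i) * t))⁻¹) - 1 -
          (t : ℂ) ^ (-(d : ℂ)) * Complex.exp (-c * t) / (∏ i, w i) *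
            ∑ k ∈ Finset.range (M + 1), (-1 : ℂ) ^ k * b k * (t : ℂ) ^ k / (k.factorial : ℂ) +
          Complex.exp (-c * t) *
            ∑ k ∈ Finset.range (M + 1 - d), (c * t) ^ k / (k.factorial : ℂ))
      = ((t : ℂ) ^ d)⁻¹ * Complex.exp (-c * t) * (∏ i, w i)⁻¹ *
          (((t : ℂ) ^ d * Complex.exp (c * t) * ((∏ i, w i) *
            ∏ i, (1 - Complex.exp (-(w i) * t))⁻¹)) -
            ∑ k ∈ Finset.range (M + 1), b k * (-(t : ℂ)) ^ k / (k.factorial : ℂ)) +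
        (Complex.exp (-c * t) *
            (∑ k ∈ Finset.range (M + 1 - d), (c * t) ^ k / (k.factorial : ℂ)) - 1) := by
    intro t ht
    have htC : (t : ℂ) ≠ 0 := by exact_mod_cast ht.ne'
    have htd : ((t : ℂ)) ^ d ≠ 0 := pow_ne_zero _ htC
    have hcpowd : (t : ℂ) ^ (-(d : ℂ)) = ((t : ℂ) ^ d)⁻¹ := by
      rw [Complex.cpow_neg, Complex.cpow_natCast]
    have hsum_eq : ∑ k ∈ Finset.range (M + 1), (-1 : ℂ) ^ k * b k * (t : ℂ) ^ k / (k.factorial : ℂ)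
        = ∑ k ∈ Finset.range (M + 1), b k * (-(t : ℂ)) ^ k / (k.factorial : ℂ) := by
      refine Finset.sum_congr rfl fun k _ => ?_
      rw [neg_pow]; ring
    rw [hcpowd, hsum_eq, div_eq_mul_inv]
    have hinv : Complex.exp (-c * t) = (Complex.exp (c * t))⁻¹ := by
      rw [← Complex.exp_neg]; ring_nf
    have hPP : ((t : ℂ) ^ d)⁻¹ * Complex.exp (-c * t) * (∏ i, w i)⁻¹ *
        ((t : ℂ) ^ d * Complex.exp (c * t) * ((∏ i, w i) *
          ∏ i, (1 - Complex.exp (-(w i) * t))⁻¹))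
        = ∏ i, (1 - Complex.exp (-(w i) * t))⁻¹ := by
      rw [hinv]
      field_simp
    linear_combination -hPP
  -- bound on the series tail, for 0 < t ≤ T
  have htail : ∀ t : ℝ, 0 < t → t ≤ T →
      ‖((t : ℂ) ^ d * Complex.exp (c * t) * ((∏ i, w i) *
          ∏ i, (1 - Complex.exp (-(w i) * t))⁻¹)) -
        ∑ k ∈ Finset.range (M + 1), b k * (-(t : ℂ)) ^ k / (k.factorial : ℂ)‖ ≤
        2 * A * (2 / r) ^ (M + 1) * t ^ (M + 1) := by
    intro t ht htT
    have htr2 : t < r := by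
      have := htT.trans hTr
      linarith
    have hS := hkey t ht htr2
    have hTailSum := (hasSum_nat_add_iff' (M + 1)).2 hS
    set q : ℝ := 2 * t / r with hqdef
    have hq0 : 0 ≤ q := by positivity
    have hq2 : q ≤ 1 / 2 := by
      rw [hqdef, div_le_iff₀ hr]
      have := htT.trans hTr
      nlinarith
    have hq1 : q < 1 := lt_of_le_of_lt hq2 (by norm_num)
    have hterm : ∀ k : ℕ,
        ‖b (k + (M + 1)) * (-(t : ℂ)) ^ (k + (M + 1)) / (((k + (M + 1)).factorial : ℕ) : ℂ)‖
          ≤ (A * q ^ (M + 1)) * q ^ k := by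
      intro k
      have hfacC : ‖(((k + (M + 1)).factorial : ℕ) : ℂ)‖ = ((k + (M + 1)).factorial : ℝ) := by
        rw [Complex.norm_natCast]
      have h1 : ‖b (k + (M + 1)) * (-(t : ℂ)) ^ (k + (M + 1)) /
          (((k + (M + 1)).factorial : ℕ) : ℂ)‖
          = ‖b (k + (M + 1))‖ / ((k + (M + 1)).factorial : ℝ) * t ^ (k + (M + 1)) := by
        rw [norm_div, norm_mul, norm_pow, norm_neg, hfacC]
        rw [Complex.norm_real, Real.norm_eq_abs, abs_of_pos ht]
        ring
      rw [h1]
      calc ‖b (k + (M + 1))‖ / ((k + (M + 1)).factorial : ℝ) * t ^ (k + (M + 1))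
          ≤ (A * (2 / r) ^ (k + (M + 1))) * t ^ (k + (M + 1)) := by
            have := hA (k + (M + 1))
            gcongr
        _ = (A * q ^ (M + 1)) * q ^ k := by
            have hqt : q = (2 / r) * t := by rw [hqdef]; ring
            simp only [hqt, mul_pow, pow_add]
            ring
    have hgeo : HasSum (fun k : ℕ => (A * q ^ (M + 1)) * q ^ k)
        ((A * q ^ (M + 1)) * (1 - q)⁻¹) :=
      (hasSum_geometric_of_lt_one hq0 hq1).mul_left _
    have hsummable : Summable (fun k : ℕ =>
        ‖b (k + (M + 1)) * (-(t : ℂ)) ^ (k + (M + 1)) / (((k + (M + 1)).factorial : ℕ) : ℂ)‖) :=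
      Summable.of_nonneg_of_le (fun k => norm_nonneg _) hterm hgeo.summable
    have hnorm : ‖((t : ℂ) ^ d * Complex.exp (c * t) * ((∏ i, w i) *
          ∏ i, (1 - Complex.exp (-(w i) * t))⁻¹)) -
        ∑ k ∈ Finset.range (M + 1), b k * (-(t : ℂ)) ^ k / (k.factorial : ℂ)‖
        ≤ (A * q ^ (M + 1)) * (1 - q)⁻¹ := by
      rw [← hTailSum.tsum_eq]
      refine (norm_tsum_le_tsum_norm hsummable).trans ?_
      rw [← hgeo.tsum_eq]
      exact hsummable.tsum_le_tsum hterm hgeo.summable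
    refine hnorm.trans ?_
    have h2 : (1 - q)⁻¹ ≤ 2 := by
      have h21 : (1:ℝ)/2 ≤ 1 - q := by linarith
      have := inv_anti₀ (by norm_num : (0:ℝ) < 1/2) h21
      simpa using this
    have hqpow : q ^ (M + 1) = (2 / r) ^ (M + 1) * t ^ (M + 1) := by
      rw [← mul_pow]
      congr 1
      rw [hqdef]; ring
    calc (A * q ^ (M + 1)) * (1 - q)⁻¹ ≤ (A * q ^ (M + 1)) * 2 := by
          have : (0:ℝ) ≤ A * q ^ (M + 1) := by positivity
          gcongr
      _ = 2 * A * (2 / r) ^ (M + 1) * t ^ (M + 1) := by rw [hqpow]; ring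
  -- bound on the exponential remainder, for 0 < t ≤ T
  set CE : ℝ := max 1 (2 * (‖c‖ + 1) ^ (M + 1 - d)) with hCEdef
  have hCE0 : 0 ≤ CE := le_trans zero_le_one (le_max_left _ _)
  have hEbd : ∀ t : ℝ, 0 < t → t ≤ T →
      ‖Complex.exp (-c * t) *
          (∑ k ∈ Finset.range (M + 1 - d), (c * t) ^ k / (k.factorial : ℂ)) - 1‖ ≤
        CE * t ^ ((M : ℝ) + 1 - d) := by
    intro t ht htT
    have hCE1 : (1:ℝ) ≤ CE := le_max_left _ _
    rcases Nat.eq_zero_or_pos (M + 1 - d) with hN | hN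
    · rw [hN]
      simp only [Finset.range_zero, Finset.sum_empty, mul_zero, zero_sub, norm_neg, norm_one]
      have hMd : (M : ℝ) + 1 - d ≤ 0 := by
        have h1 : M + 1 ≤ d := by omega
        have h2 : ((M:ℝ) + 1) ≤ (d:ℝ) := by exact_mod_cast h1
        linarith
      have h1 : (1:ℝ) ≤ t ^ ((M : ℝ) + 1 - d) :=
        Real.one_le_rpow_of_pos_of_le_one_of_nonpos ht (htT.trans hT1) hMd
      nlinarith
    · set N := M + 1 - d with hNdef
      have habs : ‖c * (t:ℂ)‖ ≤ 1 := by
        rw [norm_mul, Complex.norm_real, Real.norm_eq_abs, abs_of_pos ht]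
        have hc1 : (0:ℝ) < ‖c‖ + 1 := by positivity
        calc ‖c‖ * t ≤ ‖c‖ * (‖c‖ + 1)⁻¹ := by
              have := htT.trans hTc
              gcongr
          _ ≤ (‖c‖ + 1) * (‖c‖ + 1)⁻¹ := by
              have : (0:ℝ) ≤ (‖c‖ + 1)⁻¹ := by positivity
              gcongr
              linarith
          _ = 1 := mul_inv_cancel₀ (ne_of_gt hc1)
      have hEB := Complex.exp_bound habs hN
      have hexpc : Complex.exp (-c * (t:ℂ)) * Complex.exp (c * (t:ℂ)) = 1 := by
        rw [← Complex.exp_add, show -c * (t:ℂ) + c * t = 0 by ring, Complex.exp_zero]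
      have hrw : Complex.exp (-c * t) *
          (∑ k ∈ Finset.range N, (c * (t:ℂ)) ^ k / (k.factorial : ℂ)) - 1
          = -(Complex.exp (-c * t) * (Complex.exp (c * (t:ℂ)) -
              ∑ k ∈ Finset.range N, (c * (t:ℂ)) ^ k / (k.factorial : ℂ))) := by
        linear_combination hexpc
      rw [hrw, norm_neg, norm_mul]
      have h2 : ‖Complex.exp (-c * (t:ℂ))‖ ≤ 1 := by
        rw [hb_exp_norm, hb_re_neg_mul]
        calc Real.exp (-(c.re * t)) ≤ Real.exp 0 := by
              apply Real.exp_le_exp.2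
              nlinarith
          _ = 1 := Real.exp_zero
      have h3 : ‖Complex.exp (c * (t:ℂ)) -
          ∑ k ∈ Finset.range N, (c * (t:ℂ)) ^ k / (k.factorial : ℂ)‖
          ≤ ‖c * (t:ℂ)‖ ^ N * ((N.succ : ℝ) * ((N.factorial : ℝ) * N)⁻¹) := by
        exact_mod_cast hEB
      have h4 : (N.succ : ℝ) * ((N.factorial : ℝ) * N)⁻¹ ≤ 2 := by
        have hf : 1 ≤ N.factorial := Nat.one_le_iff_ne_zero.2 (Nat.factorial_ne_zero N)
        have hNN : N + 1 ≤ 2 * (N.factorial * N) := by nlinarith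
        have hpos : (0:ℝ) < (N.factorial : ℝ) * N := by
          have : (0:ℝ) < (N:ℝ) := by exact_mod_cast hN
          positivity
        rw [← div_eq_mul_inv, div_le_iff₀ hpos]
        have := (Nat.cast_le (α := ℝ)).2 hNN
        push_cast at this ⊢
        linarith
      have h5 : ‖c * (t:ℂ)‖ = ‖c‖ * t := by
        rw [norm_mul, Complex.norm_real, Real.norm_eq_abs, abs_of_pos ht]
      have htN : t ^ ((M : ℝ) + 1 - d) = t ^ (N : ℕ) := by
        have hcast : ((N : ℕ) : ℝ) = (M : ℝ) + 1 - d := by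
          rw [hNdef]
          have hdM : d ≤ M + 1 := by omega
          push_cast [Nat.cast_sub hdM]
          ring
        rw [← hcast, Real.rpow_natCast]
      rw [htN]
      calc ‖Complex.exp (-c * (t:ℂ))‖ * ‖Complex.exp (c * (t:ℂ)) -
            ∑ k ∈ Finset.range N, (c * (t:ℂ)) ^ k / (k.factorial : ℂ)‖
          ≤ 1 * (‖c * (t:ℂ)‖ ^ N * ((N.succ : ℝ) * ((N.factorial : ℝ) * N)⁻¹)) := by
            have h0 : (0:ℝ) ≤ ‖c * (t:ℂ)‖ ^ N := by positivity
            exact mul_le_mul h2 h3 (norm_nonneg _) zero_le_one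
        _ ≤ 1 * ((‖c‖ * t) ^ N * 2) := by
            rw [h5]
            have h0 : (0:ℝ) ≤ (‖c‖ * t) ^ N := by positivity
            gcongr
        _ = 2 * ‖c‖ ^ N * t ^ N := by rw [mul_pow]; ring
        _ ≤ 2 * (‖c‖ + 1) ^ N * t ^ N := by
            have h0 : (0:ℝ) ≤ t ^ N := by positivity
            gcongr
            · linarith [norm_nonneg c]
        _ ≤ CE * t ^ N := by
            have h0 : (0:ℝ) ≤ t ^ N := by positivity
            have : 2 * (‖c‖ + 1) ^ N ≤ CE := by
              rw [hCEdef, hNdef]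
              exact le_max_right _ _
            gcongr
  -- the three pieces
  set B : ℝ := ‖(∏ i, w i)⁻¹‖ with hBdef
  set K₁ : ℝ := B * (2 * A * (2 / r) ^ (M + 1)) + CE with hK₁def
  have hB0 : 0 ≤ B := hBdef ▸ norm_nonneg _
  have hbound0 : ∀ t ∈ Ioc (0:ℝ) T, ‖F t‖ ≤ K₁ * t ^ (α.re + M - d) := by
    rintro t ⟨ht, htT⟩
    have hcast : ‖(t : ℂ) ^ (α - 1)‖ = t ^ (α.re - 1) := by
      rw [Complex.norm_cpow_eq_rpow_re_of_pos ht]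
      congr 1
    have hexp1 : ‖Complex.exp (-c * (t : ℂ))‖ ≤ 1 := by
      rw [hb_exp_norm, hb_re_neg_mul]
      calc Real.exp (-(c.re * t)) ≤ Real.exp 0 := Real.exp_le_exp.2 (by nlinarith)
        _ = 1 := Real.exp_zero
    have hXnorm : ‖((t : ℂ) ^ d)⁻¹ * Complex.exp (-c * t) * (∏ i, w i)⁻¹‖ ≤ (t ^ d)⁻¹ * B := by
      rw [norm_mul, norm_mul, norm_inv, norm_pow]
      rw [Complex.norm_real, Real.norm_eq_abs, abs_of_pos ht, ← hBdef]
      calc (t ^ d)⁻¹ * ‖Complex.exp (-c * (t : ℂ))‖ * B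
          ≤ (t ^ d)⁻¹ * 1 * B := by
            have h0 : (0:ℝ) ≤ (t ^ d)⁻¹ := by positivity
            gcongr
        _ = (t ^ d)⁻¹ * B := by ring
    have hFt : F t = (t : ℂ) ^ (α - 1) *
        (((t : ℂ) ^ d)⁻¹ * Complex.exp (-c * t) * (∏ i, w i)⁻¹ *
          (((t : ℂ) ^ d * Complex.exp (c * t) * ((∏ i, w i) *
            ∏ i, (1 - Complex.exp (-(w i) * t))⁻¹)) -
            ∑ k ∈ Finset.range (M + 1), b k * (-(t : ℂ)) ^ k / (k.factorial : ℂ)) +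
          (Complex.exp (-c * t) *
            (∑ k ∈ Finset.range (M + 1 - d), (c * t) ^ k / (k.factorial : ℂ)) - 1)) := by
      rw [hFdef]
      dsimp only
      rw [hbracket t ht]
    have hconv : ((t : ℝ) ^ d)⁻¹ * t ^ (M + 1) = t ^ ((M : ℝ) + 1 - (d : ℝ)) := by
      rw [← Real.rpow_natCast t d, ← Real.rpow_natCast t (M + 1), ← Real.rpow_neg ht.le,
        ← Real.rpow_add ht]
      congr 1
      push_cast
      ring
    have hrpow0 : (0:ℝ) ≤ t ^ ((M : ℝ) + 1 - (d : ℝ)) := Real.rpow_nonneg ht.le _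
    calc ‖F t‖ = t ^ (α.re - 1) * ‖((t : ℂ) ^ d)⁻¹ * Complex.exp (-c * t) * (∏ i, w i)⁻¹ *
          (((t : ℂ) ^ d * Complex.exp (c * t) * ((∏ i, w i) *
            ∏ i, (1 - Complex.exp (-(w i) * t))⁻¹)) -
            ∑ k ∈ Finset.range (M + 1), b k * (-(t : ℂ)) ^ k / (k.factorial : ℂ)) +
          (Complex.exp (-c * t) *
            (∑ k ∈ Finset.range (M + 1 - d), (c * t) ^ k / (k.factorial : ℂ)) - 1)‖ := by
          rw [hFt, norm_mul, hcast]
      _ ≤ t ^ (α.re - 1) * (((t ^ d)⁻¹ * B) * (2 * A * (2 / r) ^ (M + 1) * t ^ (M + 1)) +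
            CE * t ^ ((M : ℝ) + 1 - d)) := by
          have h0 : (0:ℝ) ≤ t ^ (α.re - 1) := Real.rpow_nonneg ht.le _
          refine mul_le_mul_of_nonneg_left ?_ h0
          refine (norm_add_le _ _).trans ?_
          refine add_le_add ?_ (hEbd t ht htT)
          rw [norm_mul]
          exact mul_le_mul hXnorm (htail t ht htT) (norm_nonneg _)
            (by positivity)
      _ = t ^ (α.re - 1) * ((B * (2 * A * (2 / r) ^ (M + 1))) *
            (((t : ℝ) ^ d)⁻¹ * t ^ (M + 1)) + CE * t ^ ((M : ℝ) + 1 - d)) := by ring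
      _ = t ^ (α.re - 1) * (K₁ * t ^ ((M : ℝ) + 1 - d)) := by
          rw [hconv, hK₁def]
          ring
      _ = K₁ * t ^ (α.re + M - d) := by
          rw [show α.re + (M : ℝ) - d = (α.re - 1) + ((M : ℝ) + 1 - d) by ring,
            Real.rpow_add ht]
          ring
  have piece1 : IntegrableOn F (Ioc 0 T) := by
    have hexp0 : (-1:ℝ) < α.re + M - d := by
      have : ((d:ℝ) - M - 1) < α.re := hα
      linarith
    have hint : IntegrableOn (fun t : ℝ => K₁ * t ^ (α.re + M - d)) (Ioc 0 T) := by
      have := (intervalIntegral.intervalIntegrable_rpow' (a := 0) (b := T) hexp0)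
      rw [intervalIntegrable_iff_integrableOn_Ioc_of_le hT0.le] at this
      exact this.const_mul _
    refine hint.mono' ?_ ?_
    · exact (hcont.mono Ioc_subset_Ioi_self).aestronglyMeasurable measurableSet_Ioc
    · exact (ae_restrict_iff' measurableSet_Ioc).2 (Filter.Eventually.of_forall fun t ht =>
        hbound0 t ht)
  have piece2 : IntegrableOn F (Ioc T 1) := by
    have hsub : Icc T (1:ℝ) ⊆ Ioi 0 := fun x hx => lt_of_lt_of_le hT0 hx.1
    exact ((hcont.mono hsub).integrableOn_Icc).mono_set Ioc_subset_Icc_self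
  -- bound at infinity
  obtain ⟨K₂, hK₂0, hboundInf⟩ : ∃ K₂ : ℝ, 0 ≤ K₂ ∧ ∀ t ∈ Ioi (1:ℝ),
      ‖F t‖ ≤ K₂ * (t ^ (α.re - 1 + M) * Real.exp (-ε * t)) := by
    have hδ0 : 0 < 1 - Real.exp (-m) := by
      have : Real.exp (-m) < 1 := Real.exp_lt_one_iff.2 (by linarith)
      linarith
    set δ : ℝ := 1 - Real.exp (-m) with hδdef
    have hδ1 : δ ≤ 1 := by
      have : 0 < Real.exp (-m) := Real.exp_pos _
      rw [hδdef]; linarith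
    have hbb1 : (1:ℝ) ≤ δ⁻¹ := by
      have h := inv_anti₀ hδ0 hδ1
      simpa using h
    set CP : ℝ := (d : ℝ) * (δ⁻¹) ^ d * δ⁻¹ with hCPdef
    set CQ : ℝ := (∑ k ∈ Finset.range (M + 1), ‖b k‖ / (k.factorial : ℝ)) * B with hCQdef
    set CR : ℝ := ∑ k ∈ Finset.range (M + 1 - d), ‖c‖ ^ k / (k.factorial : ℝ)
      with hCRdef
    have hCP0 : 0 ≤ CP := by rw [hCPdef]; positivity
    have hCQ0 : 0 ≤ CQ := by
      rw [hCQdef]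
      apply mul_nonneg _ hB0
      exact Finset.sum_nonneg fun k _ => by positivity
    have hCR0 : 0 ≤ CR := by
      rw [hCRdef]
      exact Finset.sum_nonneg fun k _ => by positivity
    refine ⟨CP + CQ + CR, by linarith, ?_⟩
    intro t htmem
    have ht1 : 1 < t := htmem
    have ht : 0 < t := lt_trans one_pos ht1
    have htM : (1:ℝ) ≤ t ^ M := one_le_pow₀ ht1.le
    have hεm : ε ≤ m := min_le_left _ _
    have hεc : ε ≤ c.re := min_le_right _ _
    -- bound on the product term
    have hxb : ∀ i, ‖(1 - Complex.exp (-(w i) * t))⁻¹‖ ≤ δ⁻¹ := by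
      intro i
      have hlow : δ ≤ ‖1 - Complex.exp (-(w i) * t)‖ := by
        refine le_trans ?_ hb_den_norm
        rw [hδdef]
        have : Real.exp (-((w i).re * t)) ≤ Real.exp (-m) := by
          apply Real.exp_le_exp.2
          have := hm_le i
          nlinarith
        linarith
      rw [norm_inv]
      exact inv_anti₀ hδ0 hlow
    have hx1 : ∀ i, ‖(1 - Complex.exp (-(w i) * t))⁻¹ - 1‖ ≤ Real.exp (-(m * t)) * δ⁻¹ := by
      intro i
      have hne := hb_den_ne (hw i) ht
      have hid : (1 - Complex.exp (-(w i) * t))⁻¹ - 1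
          = Complex.exp (-(w i) * t) * (1 - Complex.exp (-(w i) * t))⁻¹ := by
        linear_combination mul_inv_cancel₀ hne
      rw [hid, norm_mul]
      have h1 : ‖Complex.exp (-(w i) * (t:ℂ))‖ ≤ Real.exp (-(m * t)) := by
        rw [hb_exp_norm, hb_re_neg_mul]
        apply Real.exp_le_exp.2
        have := hm_le i
        nlinarith
      exact mul_le_mul h1 (hxb i) (norm_nonneg _) (Real.exp_nonneg _)
    have hProd : ‖(∏ i, (1 - Complex.exp (-(w i) * t))⁻¹) - 1‖
        ≤ CP * Real.exp (-(m * t)) := by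
      have h := hb_prod_sub_one Finset.univ (fun i => (1 - Complex.exp (-(w i) * t))⁻¹)
        hbb1 (by positivity) hxb hx1
      rw [Finset.card_univ, Fintype.card_fin] at h
      refine h.trans ?_
      rw [hCPdef]
      ring_nf
      exact le_refl _
    -- bound on the Q term
    have hQsum : ‖∑ k ∈ Finset.range (M + 1), (-1 : ℂ) ^ k * b k * (t : ℂ) ^ k /
        (k.factorial : ℂ)‖ ≤ (∑ k ∈ Finset.range (M + 1), ‖b k‖ / (k.factorial : ℝ)) * t ^ M := by
      refine (norm_sum_le _ _).trans ?_
      rw [Finset.sum_mul]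
      refine Finset.sum_le_sum fun k hk => ?_
      have hkM : k ≤ M := Nat.lt_succ_iff.1 (Finset.mem_range.1 hk)
      have hfacC : ‖((k.factorial : ℕ) : ℂ)‖ = (k.factorial : ℝ) := by
        rw [Complex.norm_natCast]
      rw [norm_div, norm_mul, norm_mul, norm_pow, norm_pow, hfacC,
        Complex.norm_real, Real.norm_eq_abs, abs_of_pos ht]
      simp only [norm_neg, norm_one, one_pow, one_mul]
      calc ‖b k‖ * t ^ k / (k.factorial : ℝ) ≤ ‖b k‖ * t ^ M / (k.factorial : ℝ) := by
            have : t ^ k ≤ t ^ M := pow_le_pow_right₀ ht1.le hkM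
            gcongr
        _ = ‖b k‖ / (k.factorial : ℝ) * t ^ M := by ring
    have hcpowt : ‖(t : ℂ) ^ (-(d : ℂ))‖ ≤ 1 := by
      rw [Complex.norm_cpow_eq_rpow_re_of_pos ht]
      apply Real.rpow_le_one_of_one_le_of_nonpos ht1.le
      simp
    have hexpc : ‖Complex.exp (-c * (t:ℂ))‖ = Real.exp (-(c.re * t)) := by
      rw [hb_exp_norm, hb_re_neg_mul]
    have hQ : ‖(t : ℂ) ^ (-(d : ℂ)) * Complex.exp (-c * t) / (∏ i, w i) *
        ∑ k ∈ Finset.range (M + 1), (-1 : ℂ) ^ k * b k * (t : ℂ) ^ k / (k.factorial : ℂ)‖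
        ≤ Real.exp (-(c.re * t)) * (CQ * t ^ M) := by
      rw [norm_mul, norm_div]
      have hBinv : ‖∏ i, w i‖⁻¹ = B := by rw [hBdef, norm_inv]
      calc ‖(t : ℂ) ^ (-(d : ℂ)) * Complex.exp (-c * (t:ℂ))‖ / ‖∏ i, w i‖ *
            ‖∑ k ∈ Finset.range (M + 1), (-1 : ℂ) ^ k * b k * (t : ℂ) ^ k / (k.factorial : ℂ)‖
          ≤ (1 * Real.exp (-(c.re * t))) * ‖∏ i, w i‖⁻¹ *
            ((∑ k ∈ Finset.range (M + 1), ‖b k‖ / (k.factorial : ℝ)) * t ^ M) := by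
            rw [div_eq_mul_inv]
            refine mul_le_mul ?_ hQsum (norm_nonneg _) ?_
            · refine mul_le_mul_of_nonneg_right ?_ (by positivity)
              rw [norm_mul, hexpc]
              exact mul_le_mul_of_nonneg_right hcpowt (Real.exp_nonneg _)
            · positivity
        _ = Real.exp (-(c.re * t)) * (CQ * t ^ M) := by
            rw [hBinv, hCQdef]
            ring
    -- bound on the R term
    have hR : ‖Complex.exp (-c * t) *
        ∑ k ∈ Finset.range (M + 1 - d), (c * t) ^ k / (k.factorial : ℂ)‖
        ≤ Real.exp (-(c.re * t)) * (CR * t ^ M) := by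
      rw [norm_mul, hexpc]
      refine mul_le_mul_of_nonneg_left ?_ (Real.exp_nonneg _)
      refine (norm_sum_le _ _).trans ?_
      rw [hCRdef, Finset.sum_mul]
      refine Finset.sum_le_sum fun k hk => ?_
      have hkM : k ≤ M := by
        have := Finset.mem_range.1 hk
        omega
      have hfacC : ‖((k.factorial : ℕ) : ℂ)‖ = (k.factorial : ℝ) := by
        rw [Complex.norm_natCast]
      rw [norm_div, norm_pow, hfacC, norm_mul, Complex.norm_real, Real.norm_eq_abs,
        abs_of_pos ht, mul_pow]
      calc ‖c‖ ^ k * t ^ k / (k.factorial : ℝ)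
          ≤ ‖c‖ ^ k * t ^ M / (k.factorial : ℝ) := by
            have : t ^ k ≤ t ^ M := pow_le_pow_right₀ ht1.le hkM
            gcongr
        _ = ‖c‖ ^ k / (k.factorial : ℝ) * t ^ M := by ring
    -- put everything together
    have hcast : ‖(t : ℂ) ^ (α - 1)‖ = t ^ (α.re - 1) := by
      rw [Complex.norm_cpow_eq_rpow_re_of_pos ht]
      congr 1
    have hexpm : Real.exp (-(m * t)) ≤ Real.exp (-ε * t) := by
      apply Real.exp_le_exp.2
      nlinarith
    have hexpcre : Real.exp (-(c.re * t)) ≤ Real.exp (-ε * t) := by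
      apply Real.exp_le_exp.2
      nlinarith
    have hbr : ‖(∏ i, (1 - Complex.exp (-(w i) * t))⁻¹) - 1 -
          (t : ℂ) ^ (-(d : ℂ)) * Complex.exp (-c * t) / (∏ i, w i) *
            ∑ k ∈ Finset.range (M + 1), (-1 : ℂ) ^ k * b k * (t : ℂ) ^ k / (k.factorial : ℂ) +
          Complex.exp (-c * t) *
            ∑ k ∈ Finset.range (M + 1 - d), (c * t) ^ k / (k.factorial : ℂ)‖
        ≤ (CP + CQ + CR) * (t ^ M * Real.exp (-ε * t)) := by
      refine (norm_add_le _ _).trans ?_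
      refine le_trans (add_le_add (le_trans (norm_sub_le _ _)
        (add_le_add hProd hQ)) hR) ?_
      have e1 : CP * Real.exp (-(m * t)) ≤ CP * (t ^ M * Real.exp (-ε * t)) := by
        refine mul_le_mul_of_nonneg_left ?_ hCP0
        calc Real.exp (-(m * t)) ≤ Real.exp (-ε * t) := hexpm
          _ = 1 * Real.exp (-ε * t) := (one_mul _).symm
          _ ≤ t ^ M * Real.exp (-ε * t) :=
            mul_le_mul_of_nonneg_right htM (Real.exp_nonneg _)
      have e2 : Real.exp (-(c.re * t)) * (CQ * t ^ M) ≤ CQ * (t ^ M * Real.exp (-ε * t)) := by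
        calc Real.exp (-(c.re * t)) * (CQ * t ^ M)
            ≤ Real.exp (-ε * t) * (CQ * t ^ M) :=
              mul_le_mul_of_nonneg_right hexpcre
                (mul_nonneg hCQ0 (pow_nonneg ht.le M))
          _ = CQ * (t ^ M * Real.exp (-ε * t)) := by ring
      have e3 : Real.exp (-(c.re * t)) * (CR * t ^ M) ≤ CR * (t ^ M * Real.exp (-ε * t)) := by
        calc Real.exp (-(c.re * t)) * (CR * t ^ M)
            ≤ Real.exp (-ε * t) * (CR * t ^ M) :=
              mul_le_mul_of_nonneg_right hexpcre
                (mul_nonneg hCR0 (pow_nonneg ht.le M))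
          _ = CR * (t ^ M * Real.exp (-ε * t)) := by ring
      calc CP * Real.exp (-(m * t)) + Real.exp (-(c.re * t)) * (CQ * t ^ M) +
            Real.exp (-(c.re * t)) * (CR * t ^ M)
          ≤ CP * (t ^ M * Real.exp (-ε * t)) + CQ * (t ^ M * Real.exp (-ε * t)) +
            CR * (t ^ M * Real.exp (-ε * t)) := add_le_add (add_le_add e1 e2) e3
        _ = (CP + CQ + CR) * (t ^ M * Real.exp (-ε * t)) := by ring
    calc ‖F t‖ ≤ t ^ (α.re - 1) * ((CP + CQ + CR) * (t ^ M * Real.exp (-ε * t))) := by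
          rw [hFdef]
          dsimp only
          rw [norm_mul, hcast]
          exact mul_le_mul_of_nonneg_left hbr (Real.rpow_nonneg ht.le _)
      _ = (CP + CQ + CR) * (t ^ (α.re - 1 + M) * Real.exp (-ε * t)) := by
          rw [show α.re - 1 + (M:ℝ) = (α.re - 1) + (M:ℝ) by ring, Real.rpow_add ht,
            Real.rpow_natCast]
          ring
  have piece3 : IntegrableOn F (Ioi 1) := by
    have hexpInf : (-1:ℝ) < α.re - 1 + M := by
      have h1 : (1:ℝ) ≤ d := by exact_mod_cast hd
      have : ((d:ℝ) - M - 1) < α.re := hα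
      linarith
    have hint : IntegrableOn (fun t : ℝ => K₂ * (t ^ (α.re - 1 + M) * Real.exp (-ε * t)))
        (Ioi 1) := by
      have h := integrableOn_rpow_mul_exp_neg_mul_rpow (p := 1) (s := α.re - 1 + M)
        (b := ε) hexpInf one_pos hε
      simp only [Real.rpow_one] at h
      exact (h.mono_set (Ioi_subset_Ioi zero_le_one)).const_mul _
    refine hint.mono' ?_ ?_
    · exact (hcont.mono (Ioi_subset_Ioi zero_le_one)).aestronglyMeasurable measurableSet_Ioi
    · exact (ae_restrict_iff' measurableSet_Ioi).2 (Filter.Eventually.of_forall fun t ht =>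
        hboundInf t ht)
  have hU1 : Ioc T (1:ℝ) ∪ Ioi 1 = Ioi T := Ioc_union_Ioi_eq_Ioi hT1
  have hU2 : Ioc (0:ℝ) T ∪ Ioi T = Ioi 0 := Ioc_union_Ioi_eq_Ioi hT0.le
  rw [← hU2, ← hU1]
  exact piece1.union (piece2.union piece3)
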